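/- arXiv:1802.07446 — 3 statements merged into one kernel-verified Lean document; each statement's English description precedes it below -/
import Mathlib

section
/- Let k be a positive integer and let a_n and b_1^n,…,b_k^n be sequences of nonnegative integers with Σ_{i=1}^k b_i^n ≤ a_n. If a_n/binom(n,2) → 1 and, for each 1 ≤ i ≤ k, b_i^n/n → b_i ≥ 0, then ( log binom(a_n; {b_i^n}_{1≤i≤k}) − (Σ_{i=1}^k b_i^n) log n ) / n converges to Σ_{i=1}^k s(2 b_i), where s(x) := x/2 − (x/2) log x for x > 0 and s(0) := 0. -/
open Filter Finset

open scoped Classical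

noncomputable section

/-- Shannon entropy (natural logarithm) of a weight function on a finite type;
since `Real.log 0 = 0`, the usual convention `0 · log 0 = 0` holds. -/
def shannonEntropy {α : Type*} [Fintype α] (P : α → ℝ) : ℝ :=
  - ∑ a, P a * Real.log (P a)

/-- `P` is a probability vector on the finite type `α`. -/
def IsProbVec {α : Type*} [Fintype α] (P : α → ℝ) : Prop :=
  (∀ a, 0 ≤ P a) ∧ ∑ a, P a = 1

/-- `s(x) = x/2 - (x/2)·log x`; since `Real.log 0 = 0`, `sFun 0 = 0`. -/
def sFun (x : ℝ) : ℝ := x / 2 - x / 2 * Real.log x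

/-- A marked graph on the vertex set `Fin n` with edge marks `Ξ` and vertex marks `Θ`:
a symmetric, irreflexive `Option Ξ`-valued edge-mark function (`none` = no edge)
together with a vertex-mark function. -/
abbrev MarkedGraph (n : ℕ) (Ξ Θ : Type) :=
  {fe : (Fin n → Fin n → Option Ξ) × (Fin n → Θ) //
    (∀ i j, fe.1 i j = fe.1 j i) ∧ ∀ i, fe.1 i i = none}

/-- The joint edge-mark set `Ξ₁₂ = ((Ξ₁∪{∘₁})×(Ξ₂∪{∘₂})) \ {(∘₁,∘₂)}`,
with `none` playing the role of `∘ᵢ`. -/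
abbrev JointEdgeMark (Ξ1 Ξ2 : Type) := {x : Option Ξ1 × Option Ξ2 // x ≠ (none, none)}

instance (Ξ1 Ξ2 : Type) [Fintype Ξ1] [Fintype Ξ2] : Fintype (JointEdgeMark Ξ1 Ξ2) :=
  Subtype.fintype _

instance (n : ℕ) (Ξ Θ : Type) [Fintype Ξ] [Fintype Θ] : Fintype (MarkedGraph n Ξ Θ) :=
  Subtype.fintype _

/-- A jointly marked graph. -/
abbrev JointMarkedGraph (n : ℕ) (Ξ1 Ξ2 Θ1 Θ2 : Type) :=
  MarkedGraph n (JointEdgeMark Ξ1 Ξ2) (Θ1 × Θ2)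

/-- The first marginal of a jointly marked graph. -/
def marg1 {n : ℕ} {Ξ1 Ξ2 Θ1 Θ2 : Type} (G : JointMarkedGraph n Ξ1 Ξ2 Θ1 Θ2) :
    MarkedGraph n Ξ1 Θ1 :=
  ⟨(fun i j => (G.1.1 i j).bind fun x => x.1.1, fun i => (G.1.2 i).1),
    fun i j => by dsimp only; rw [G.2.1 i j],
    fun i => by dsimp only; rw [G.2.2 i]; rfl⟩

/-- The second marginal of a jointly marked graph. -/
def marg2 {n : ℕ} {Ξ1 Ξ2 Θ1 Θ2 : Type} (G : JointMarkedGraph n Ξ1 Ξ2 Θ1 Θ2) :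
    MarkedGraph n Ξ2 Θ2 :=
  ⟨(fun i j => (G.1.1 i j).bind fun x => x.1.2, fun i => (G.1.2 i).2),
    fun i j => by dsimp only; rw [G.2.1 i j],
    fun i => by dsimp only; rw [G.2.2 i]; rfl⟩

/-- Combine two optional edge marks into an optional joint edge mark. -/
def jointOpt {Ξ1 Ξ2 : Type} (a : Option Ξ1) (b : Option Ξ2) : Option (JointEdgeMark Ξ1 Ξ2) :=
  if h : (a, b) = ((none : Option Ξ1), (none : Option Ξ2)) then none else some ⟨(a, b), h⟩

/-- The superposition `G₁ ⊕ G₂` of two marked graphs on the same vertex set. -/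
def oplus {n : ℕ} {Ξ1 Ξ2 Θ1 Θ2 : Type} (H1 : MarkedGraph n Ξ1 Θ1) (H2 : MarkedGraph n Ξ2 Θ2) :
    JointMarkedGraph n Ξ1 Ξ2 Θ1 Θ2 :=
  ⟨(fun i j => jointOpt (H1.1.1 i j) (H2.1.1 i j), fun i => (H1.1.2 i, H2.1.2 i)),
    fun i j => by dsimp only; rw [H1.2.1 i j, H2.2.1 i j],
    fun i => by dsimp only; rw [H1.2.2 i, H2.2.2 i]; simp [jointOpt]⟩

/-- `m_G(x)`: the number of edges of `G` carrying mark `x`. -/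
def mCount {n : ℕ} {Ξ Θ : Type} (G : MarkedGraph n Ξ Θ) (x : Ξ) : ℕ :=
  (univ.filter (fun pr : Fin n × Fin n => pr.1 < pr.2 ∧ G.1.1 pr.1 pr.2 = some x)).card

/-- `u_G(θ)`: the number of vertices of `G` carrying mark `θ`. -/
def uCount {n : ℕ} {Ξ Θ : Type} (G : MarkedGraph n Ξ Θ) (θ : Θ) : ℕ :=
  (univ.filter (fun i => G.1.2 i = θ)).card

/-- The degree of vertex `i` in `G`. -/
def degG {n : ℕ} {Ξ Θ : Type} (G : MarkedGraph n Ξ Θ) (i : Fin n) : ℕ :=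
  (univ.filter (fun j => G.1.1 i j ≠ none)).card

/-- The total number of edges of `G`. -/
def edgeCount {n : ℕ} {Ξ Θ : Type} (G : MarkedGraph n Ξ Θ) : ℕ :=
  (univ.filter (fun pr : Fin n × Fin n => pr.1 < pr.2 ∧ G.1.1 pr.1 pr.2 ≠ none)).card

/-- `c_k(d)`: the number of indices `i` with `d i = k`. -/
def ckCount (n : ℕ) (d : Fin n → ℕ) (k : ℕ) : ℕ := (univ.filter (fun i => d i = k)).card

/-- `c_{k,l}(d, d')`: the number of indices `i` with `d i = k` and `d' i = l`. -/
def cklCount (n : ℕ) (d d' : Fin n → ℕ) (k l : ℕ) : ℕ :=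
  (univ.filter (fun i => d i = k ∧ d' i = l)).card

/-- The law of `f(A)` when `A` has law `P`. -/
def pushLaw {α β : Type*} [Fintype α] (P : α → ℝ) (f : α → β) (b : β) : ℝ :=
  ∑ a ∈ univ.filter (fun a => f a = b), P a

/-- First-coordinate marginal of a weight function on joint edge marks;
`margE1 γ (some x₁)` sums over joint marks with first coordinate `x₁`, and
`margE1 γ none` over those with first coordinate `∘₁`. -/
def margE1 {Ξ1 Ξ2 : Type} [Fintype Ξ1] [Fintype Ξ2]
    (γ : JointEdgeMark Ξ1 Ξ2 → ℝ) (a : Option Ξ1) : ℝ :=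
  ∑ x ∈ univ.filter (fun x : JointEdgeMark Ξ1 Ξ2 => x.1.1 = a), γ x

/-- Second-coordinate marginal of a weight function on joint edge marks. -/
def margE2 {Ξ1 Ξ2 : Type} [Fintype Ξ1] [Fintype Ξ2]
    (γ : JointEdgeMark Ξ1 Ξ2 → ℝ) (b : Option Ξ2) : ℝ :=
  ∑ x ∈ univ.filter (fun x : JointEdgeMark Ξ1 Ξ2 => x.1.2 = b), γ x

/-- First marginal of a vertex-mark distribution. -/
def qMarg1 {Θ1 Θ2 : Type} [Fintype Θ2] (q : Θ1 × Θ2 → ℝ) (θ1 : Θ1) : ℝ := ∑ θ2, q (θ1, θ2)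

/-- Second marginal of a vertex-mark distribution. -/
def qMarg2 {Θ1 Θ2 : Type} [Fintype Θ1] (q : Θ1 × Θ2 → ℝ) (θ2 : Θ2) : ℝ := ∑ θ1, q (θ1, θ2)

/-- The probability that the marked Erdős–Rényi ensemble `G(n;p,q)` produces
exactly the jointly marked graph `H`. -/
def erProb {Ξ1 Ξ2 Θ1 Θ2 : Type} [Fintype Ξ1] [Fintype Ξ2] (n : ℕ)
    (pe : JointEdgeMark Ξ1 Ξ2 → ℝ) (q : Θ1 × Θ2 → ℝ)
    (H : JointMarkedGraph n Ξ1 Ξ2 Θ1 Θ2) : ℝ :=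
  (∏ pr ∈ univ.filter (fun pr : Fin n × Fin n => pr.1 < pr.2),
      (H.1.1 pr.1 pr.2).elim (1 - (∑ x, pe x) / n) (fun x => pe x / n))
    * ∏ i, q (H.1.2 i)

/-- The typical set `G^{(n)}_{p,q}` for the marked Erdős–Rényi ensemble. -/
def erTypical {Ξ1 Ξ2 Θ1 Θ2 : Type} [Fintype Ξ1] [Fintype Ξ2] [Fintype Θ1] [Fintype Θ2] (n : ℕ)
    (pe : JointEdgeMark Ξ1 Ξ2 → ℝ) (q : Θ1 × Θ2 → ℝ) :
    Finset (JointMarkedGraph n Ξ1 Ξ2 Θ1 Θ2) :=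
  univ.filter (fun H =>
    (∑ x, |(mCount H x : ℝ) - n * pe x / 2|) ≤ (n : ℝ) ^ ((2 : ℝ) / 3) ∧
    (∑ θ, |(uCount H θ : ℝ) - n * q θ|) ≤ (n : ℝ) ^ ((2 : ℝ) / 3))

/-- `d_{1,2}` for the Erdős–Rényi ensemble. -/
def erD12 {Ξ1 Ξ2 : Type} [Fintype Ξ1] [Fintype Ξ2] (pe : JointEdgeMark Ξ1 Ξ2 → ℝ) : ℝ :=
  ∑ x, pe x

/-- `d_1` for the Erdős–Rényi ensemble. -/
def erD1 {Ξ1 Ξ2 : Type} [Fintype Ξ1] [Fintype Ξ2] (pe : JointEdgeMark Ξ1 Ξ2 → ℝ) : ℝ :=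
  ∑ a : Ξ1, margE1 pe (some a)

/-- `d_2` for the Erdős–Rényi ensemble. -/
def erD2 {Ξ1 Ξ2 : Type} [Fintype Ξ1] [Fintype Ξ2] (pe : JointEdgeMark Ξ1 Ξ2 → ℝ) : ℝ :=
  ∑ b : Ξ2, margE2 pe (some b)

/-- `Σ₁₂ = H(Q) + Σ_x s(p_x)` for the Erdős–Rényi ensemble. -/
def erSigma12 {Ξ1 Ξ2 Θ1 Θ2 : Type} [Fintype Ξ1] [Fintype Ξ2] [Fintype Θ1] [Fintype Θ2]
    (pe : JointEdgeMark Ξ1 Ξ2 → ℝ) (q : Θ1 × Θ2 → ℝ) : ℝ :=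
  shannonEntropy q + ∑ x, sFun (pe x)

/-- `Σ₁ = H(Q₁) + Σ_{x₁∈Ξ₁} s(p_{x₁})` for the Erdős–Rényi ensemble. -/
def erSigma1 {Ξ1 Ξ2 Θ1 Θ2 : Type} [Fintype Ξ1] [Fintype Ξ2] [Fintype Θ1] [Fintype Θ2]
    (pe : JointEdgeMark Ξ1 Ξ2 → ℝ) (q : Θ1 × Θ2 → ℝ) : ℝ :=
  shannonEntropy (qMarg1 q) + ∑ a : Ξ1, sFun (margE1 pe (some a))

/-- `Σ₂ = H(Q₂) + Σ_{x₂∈Ξ₂} s(p_{x₂})` for the Erdős–Rényi ensemble. -/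
def erSigma2 {Ξ1 Ξ2 Θ1 Θ2 : Type} [Fintype Ξ1] [Fintype Ξ2] [Fintype Θ1] [Fintype Θ2]
    (pe : JointEdgeMark Ξ1 Ξ2 → ℝ) (q : Θ1 × Θ2 → ℝ) : ℝ :=
  shannonEntropy (qMarg2 q) + ∑ b : Ξ2, sFun (margE2 pe (some b))

/-- The probability of a decoding error for the code `(f1, f2, g)` when the source
has law `P`. -/
def errProb {n L1 L2 : ℕ} {Ξ1 Ξ2 Θ1 Θ2 : Type}
    [Fintype Ξ1] [Fintype Ξ2] [Fintype Θ1] [Fintype Θ2]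
    (P : JointMarkedGraph n Ξ1 Ξ2 Θ1 Θ2 → ℝ)
    (f1 : MarkedGraph n Ξ1 Θ1 → Fin L1) (f2 : MarkedGraph n Ξ2 Θ2 → Fin L2)
    (g : Fin L1 × Fin L2 → JointMarkedGraph n Ξ1 Ξ2 Θ1 Θ2) : ℝ :=
  ∑ H ∈ univ.filter (fun H => g (f1 (marg1 H), f2 (marg2 H)) ≠ H), P H

/-- A rate tuple `(α1, R1, α2, R2)` is achievable for the family of source laws `P`. -/
def achievable {Ξ1 Ξ2 Θ1 Θ2 : Type} [Fintype Ξ1] [Fintype Ξ2] [Fintype Θ1] [Fintype Θ2]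
    (P : ∀ n : ℕ, JointMarkedGraph n Ξ1 Ξ2 Θ1 Θ2 → ℝ) (α1 R1 α2 R2 : ℝ) : Prop :=
  ∃ (L1 L2 : ℕ → ℕ) (f1 : ∀ n, MarkedGraph n Ξ1 Θ1 → Fin (L1 n))
    (f2 : ∀ n, MarkedGraph n Ξ2 Θ2 → Fin (L2 n))
    (g : ∀ n, Fin (L1 n) × Fin (L2 n) → JointMarkedGraph n Ξ1 Ξ2 Θ1 Θ2),
    limsup (fun n : ℕ => (Real.log (L1 n) - (α1 * n * Real.log n + R1 * n)) / n) atTop ≤ 0 ∧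
    limsup (fun n : ℕ => (Real.log (L2 n) - (α2 * n * Real.log n + R2 * n)) / n) atTop ≤ 0 ∧
    Tendsto (fun n => errProb (P n) (f1 n) (f2 n) (g n)) atTop (nhds 0)

/-- Membership in the rate region for the family of source laws `P`. -/
def inRateRegion {Ξ1 Ξ2 Θ1 Θ2 : Type} [Fintype Ξ1] [Fintype Ξ2] [Fintype Θ1] [Fintype Θ2]
    (P : ∀ n : ℕ, JointMarkedGraph n Ξ1 Ξ2 Θ1 Θ2 → ℝ) (α1 R1 α2 R2 : ℝ) : Prop :=
  ∃ R1s R2s : ℕ → ℝ,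
    Tendsto R1s atTop (nhds R1) ∧ Tendsto R2s atTop (nhds R2) ∧
    ∀ m, achievable P α1 (R1s m) α2 (R2s m)

/-- `(α,R) ⪰ (α',R')` iff `α > α'`, or `α = α'` and `R ≥ R'`. -/
def succeq (a b : ℝ × ℝ) : Prop := b.1 < a.1 ∨ (a.1 = b.1 ∧ b.2 ≤ a.2)

/-- The set of simple unmarked graphs on `[n]` with maximum degree `≤ Δ` whose degree
counts agree with those of the degree sequence `dseq`. -/
def cmSet (n Δ : ℕ) (dseq : Fin n → ℕ) : Finset (MarkedGraph n Unit Unit) :=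
  univ.filter (fun G =>
    (∀ i, degG G i ≤ Δ) ∧ ∀ k ≤ Δ, ckCount n (degG G) k = ckCount n dseq k)

/-- Forget all marks of a marked graph. -/
def forget {n : ℕ} {Ξ Θ : Type} (G : MarkedGraph n Ξ Θ) : MarkedGraph n Unit Unit :=
  ⟨(fun i j => (G.1.1 i j).map (fun _ => ()), fun _ => ()),
    fun i j => by dsimp only; rw [G.2.1 i j],
    fun i => by dsimp only; rw [G.2.2 i]; rfl⟩

/-- The probability that the marked configuration-model ensemble `G(n; d⁽ⁿ⁾, γ, q)`
produces exactly the jointly marked graph `H`. -/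
def cmProb {Ξ1 Ξ2 Θ1 Θ2 : Type} [Fintype Ξ1] [Fintype Ξ2] (n Δ : ℕ) (dseq : Fin n → ℕ)
    (γ : JointEdgeMark Ξ1 Ξ2 → ℝ) (q : Θ1 × Θ2 → ℝ)
    (H : JointMarkedGraph n Ξ1 Ξ2 Θ1 Θ2) : ℝ :=
  (if forget H ∈ cmSet n Δ dseq then ((cmSet n Δ dseq).card : ℝ)⁻¹ else 0) *
    (∏ pr ∈ univ.filter (fun pr : Fin n × Fin n => pr.1 < pr.2),
      (H.1.1 pr.1 pr.2).elim 1 (fun x => γ x)) *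
    ∏ i, q (H.1.2 i)

/-- `β₁ = P(Γ₁ ≠ ∘₁)`. -/
def beta1 {Ξ1 Ξ2 : Type} [Fintype Ξ1] [Fintype Ξ2] (γ : JointEdgeMark Ξ1 Ξ2 → ℝ) : ℝ :=
  ∑ x ∈ univ.filter (fun x : JointEdgeMark Ξ1 Ξ2 => x.1.1 ≠ none), γ x

/-- `β₂ = P(Γ₂ ≠ ∘₂)`. -/
def beta2 {Ξ1 Ξ2 : Type} [Fintype Ξ1] [Fintype Ξ2] (γ : JointEdgeMark Ξ1 Ξ2 → ℝ) : ℝ :=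
  ∑ x ∈ univ.filter (fun x : JointEdgeMark Ξ1 Ξ2 => x.1.2 ≠ none), γ x

/-- The joint law `P(X = k, Xᵢ = l)` where `X ∼ r` and `Xᵢ` is a `β`-thinning of `X`. -/
def pXX (r : ℕ → ℝ) (β : ℝ) (k l : ℕ) : ℝ :=
  r k * (k.choose l : ℝ) * β ^ l * (1 - β) ^ (k - l)

/-- The law of the `β`-thinning `Xᵢ` of `X ∼ r` (supported on `{0,…,Δ}`). -/
def pXlaw (Δ : ℕ) (r : ℕ → ℝ) (β : ℝ) (l : ℕ) : ℝ := ∑ k ∈ Finset.range (Δ + 1), pXX r β k l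

/-- The mean of a law supported on `{0,…,Δ}`. -/
def meanR (Δ : ℕ) (r : ℕ → ℝ) : ℝ := ∑ k ∈ Finset.range (Δ + 1), k * r k

/-- The Shannon entropy of a law supported on `{0,…,Δ}`. -/
def entR (Δ : ℕ) (r : ℕ → ℝ) : ℝ := - ∑ k ∈ Finset.range (Δ + 1), r k * Real.log (r k)

/-- `E[log X!]` for `X` with law `r` supported on `{0,…,Δ}`. -/
def elogFact (Δ : ℕ) (r : ℕ → ℝ) : ℝ := ∑ k ∈ Finset.range (Δ + 1), r k * Real.log (Nat.factorial k)

/-- `Σ₁₂ = -s(d₁₂) + H(X) - E[log X!] + H(Q) + (d₁₂/2)·H(Γ)` for the configuration model. -/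
def cmSigma12 {Ξ1 Ξ2 Θ1 Θ2 : Type} [Fintype Ξ1] [Fintype Ξ2] [Fintype Θ1] [Fintype Θ2]
    (Δ : ℕ) (r : ℕ → ℝ) (γ : JointEdgeMark Ξ1 Ξ2 → ℝ) (q : Θ1 × Θ2 → ℝ) : ℝ :=
  -sFun (meanR Δ r) + entR Δ r - elogFact Δ r + shannonEntropy q
    + meanR Δ r / 2 * shannonEntropy γ

/-- `Σ₁ = -s(d₁) + H(X₁) - E[log X₁!] + H(Q₁) + (d₁/2)·H(Γ₁ | Γ₁ ≠ ∘₁)`. -/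
def cmSigma1 {Ξ1 Ξ2 Θ1 Θ2 : Type} [Fintype Ξ1] [Fintype Ξ2] [Fintype Θ1] [Fintype Θ2]
    (Δ : ℕ) (r : ℕ → ℝ) (γ : JointEdgeMark Ξ1 Ξ2 → ℝ) (q : Θ1 × Θ2 → ℝ) : ℝ :=
  -sFun (meanR Δ (pXlaw Δ r (beta1 γ))) + entR Δ (pXlaw Δ r (beta1 γ))
    - elogFact Δ (pXlaw Δ r (beta1 γ)) + shannonEntropy (qMarg1 q)
    + meanR Δ (pXlaw Δ r (beta1 γ)) / 2
        * shannonEntropy (fun a : Ξ1 => margE1 γ (some a) / beta1 γ)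

/-- `Σ₂ = -s(d₂) + H(X₂) - E[log X₂!] + H(Q₂) + (d₂/2)·H(Γ₂ | Γ₂ ≠ ∘₂)`. -/
def cmSigma2 {Ξ1 Ξ2 Θ1 Θ2 : Type} [Fintype Ξ1] [Fintype Ξ2] [Fintype Θ1] [Fintype Θ2]
    (Δ : ℕ) (r : ℕ → ℝ) (γ : JointEdgeMark Ξ1 Ξ2 → ℝ) (q : Θ1 × Θ2 → ℝ) : ℝ :=
  -sFun (meanR Δ (pXlaw Δ r (beta2 γ))) + entR Δ (pXlaw Δ r (beta2 γ))
    - elogFact Δ (pXlaw Δ r (beta2 γ)) + shannonEntropy (qMarg2 q)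
    + meanR Δ (pXlaw Δ r (beta2 γ)) / 2
        * shannonEntropy (fun b : Ξ2 => margE2 γ (some b) / beta2 γ)

/-- The typical set `W^{(n)}` for the configuration model. -/
def Wset {Ξ1 Ξ2 Θ1 Θ2 : Type} [Fintype Ξ1] [Fintype Ξ2] [Fintype Θ1] [Fintype Θ2]
    (n Δ : ℕ) (dseq : Fin n → ℕ) (r : ℕ → ℝ)
    (γ : JointEdgeMark Ξ1 Ξ2 → ℝ) (q : Θ1 × Θ2 → ℝ) :
    Finset (JointMarkedGraph n Ξ1 Ξ2 Θ1 Θ2) :=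
  univ.filter (fun H =>
    (∀ k ≤ Δ, ckCount n (degG H) k = ckCount n dseq k) ∧
    ((∑ x, (mCount H x : ℝ)) = (∑ i, (dseq i : ℝ)) / 2) ∧
    ((∑ x, |(mCount H x : ℝ) - (∑ i, (dseq i : ℝ)) / 2 * γ x|) ≤ (n : ℝ) ^ ((2 : ℝ) / 3)) ∧
    ((∑ θ, |(uCount H θ : ℝ) - n * q θ|) ≤ (n : ℝ) ^ ((2 : ℝ) / 3)) ∧
    (∀ k ≤ Δ, ∀ l ≤ k,
      |(cklCount n (degG H) (degG (marg1 H)) k l : ℝ) - n * pXX r (beta1 γ) k l|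
        ≤ (n : ℝ) ^ ((2 : ℝ) / 3)) ∧
    (∀ k ≤ Δ, ∀ l ≤ k,
      |(cklCount n (degG H) (degG (marg2 H)) k l : ℝ) - n * pXX r (beta2 γ) k l|
        ≤ (n : ℝ) ^ ((2 : ℝ) / 3)))

/-- The law of the graph obtained from a uniformly random graph in `cmSet n Δ dseq`
by keeping every edge independently with probability `β`. -/
def percLaw (n Δ : ℕ) (dseq : Fin n → ℕ) (β : ℝ) (G1 : MarkedGraph n Unit Unit) : ℝ :=
  ∑ G ∈ cmSet n Δ dseq,
    ((cmSet n Δ dseq).card : ℝ)⁻¹ *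
      (if ∀ i j, G1.1.1 i j ≠ none → G.1.1 i j ≠ none then
        β ^ edgeCount G1 * (1 - β) ^ (edgeCount G - edgeCount G1) else 0)


lemma fact_upper (n m : ℕ) : (n+m).factorial ≤ n.factorial * (n+m)^m := by
  induction m with
  | zero => simp
  | succ m ih =>
    calc (n+(m+1)).factorial = (n+m+1) * (n+m).factorial := rfl
    _ ≤ (n+m+1) * (n.factorial * (n+m)^m) := Nat.mul_le_mul_left _ ih
    _ ≤ (n+m+1) * (n.factorial * (n+m+1)^m) :=
        Nat.mul_le_mul_left _ (Nat.mul_le_mul_left _ (Nat.pow_le_pow_left (by omega) m))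
    _ = n.factorial * (n+(m+1))^(m+1) := by ring_nf

lemma log_fact_ge (m : ℕ) : m * Real.log m - m ≤ Real.log m.factorial := by
  induction m with
  | zero => simp
  | succ m ih =>
    have hlog : Real.log (m+1).factorial = Real.log (m+1) + Real.log m.factorial := by
      rw [show ((m+1).factorial : ℝ) = (m+1) * m.factorial by push_cast [Nat.factorial_succ]; ring,
        Real.log_mul (by positivity) (by exact_mod_cast m.factorial_pos.ne')]
    rcases Nat.eq_zero_or_pos m with h0 | hm
    · subst h0; simp
    · have hmp : (0:ℝ) < m := by exact_mod_cast hm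
      have key : (m:ℝ) * (Real.log (m+1) - Real.log m) ≤ 1 := by
        have := Real.log_le_sub_one_of_pos (x := ((m:ℝ)+1)/m) (by positivity)
        rw [Real.log_div (by positivity) hmp.ne'] at this
        have h2 : Real.log (m+1) - Real.log m ≤ 1/m := by
          have he : ((m:ℝ)+1)/m - 1 = 1/m := by field_simp; ring
          linarith [this]
        calc (m:ℝ) * (Real.log (m+1) - Real.log m) ≤ m * (1/m) :=
              mul_le_mul_of_nonneg_left h2 hmp.le
          _ = 1 := by field_simp
      push_cast [hlog]
      push_cast at ih
      nlinarith [key]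

lemma log_fact_le (m : ℕ) : Real.log m.factorial ≤ m * Real.log m - m + Real.log m + 1 := by
  induction m with
  | zero => simp
  | succ m ih =>
    have hlog : Real.log (m+1).factorial = Real.log (m+1) + Real.log m.factorial := by
      rw [show ((m+1).factorial : ℝ) = (m+1) * m.factorial by push_cast [Nat.factorial_succ]; ring,
        Real.log_mul (by positivity) (by exact_mod_cast m.factorial_pos.ne')]
    rcases Nat.eq_zero_or_pos m with h0 | hm
    · subst h0; simp
    · have hmp : (0:ℝ) < m := by exact_mod_cast hm
      have key : (1:ℝ) ≤ ((m:ℝ)+1) * (Real.log (m+1) - Real.log m) := by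
        have := Real.log_le_sub_one_of_pos (x := (m:ℝ)/((m:ℝ)+1)) (by positivity)
        rw [Real.log_div hmp.ne' (by positivity)] at this
        have h2 : (1:ℝ)/((m:ℝ)+1) ≤ Real.log (m+1) - Real.log m := by
          have he : (m:ℝ)/((m:ℝ)+1) - 1 = -(1/((m:ℝ)+1)) := by field_simp; ring
          linarith [this]
        calc (1:ℝ) = ((m:ℝ)+1) * (1/((m:ℝ)+1)) := by field_simp
          _ ≤ ((m:ℝ)+1) * (Real.log (m+1) - Real.log m) :=
              mul_le_mul_of_nonneg_left h2 (by positivity)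
      push_cast [hlog]
      push_cast at ih
      nlinarith [key]

lemma log_le_two_sqrt {x : ℝ} (hx : 0 ≤ x) : Real.log x ≤ 2 * Real.sqrt x := by
  rcases eq_or_lt_of_le hx with h | h
  · simp [← h]
  · have hs : 0 < Real.sqrt x := Real.sqrt_pos.mpr h
    have h1 := Real.log_le_sub_one_of_pos hs
    rw [Real.log_sqrt hx] at h1
    nlinarith [h1]

lemma g_eq_sFun {x : ℝ} (hx : 0 ≤ x) :
    x - x * Real.log x - x * Real.log 2 = sFun (2*x) := by
  rcases eq_or_lt_of_le hx with h | h
  · simp [← h, sFun]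
  · unfold sFun
    rw [Real.log_mul two_ne_zero h.ne']
    ring


set_option maxHeartbeats 1600000 in
/-- second part of the multinomial asymptotics lemma. -/
theorem multinomial_s_limit (k : ℕ) (hk : 0 < k) (a : ℕ → ℕ) (b : Fin k → ℕ → ℕ)
    (hle : ∀ n, ∑ i, b i n ≤ a n)
    (ha : Tendsto (fun n => (a n : ℝ) / (n.choose 2 : ℝ)) atTop (nhds 1))
    (bb : Fin k → ℝ) (hb : ∀ i, Tendsto (fun n => (b i n : ℝ) / n) atTop (nhds (bb i)))
    (hbb : ∀ i, 0 ≤ bb i) :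
    Tendsto (fun n =>
        (Real.log (Nat.multinomial Finset.univ
            (fun j : Option (Fin k) => j.elim (a n - ∑ i, b i n) (fun i => b i n)))
          - (∑ i, (b i n : ℝ)) * Real.log n) / n)
      atTop (nhds (∑ i, sFun (2 * bb i))) := by
  classical
  set B : ℕ → ℕ := fun n => ∑ i, b i n with hBdef
  set β : ℝ := ∑ i, bb i with hβdef
  set L : ℕ → ℝ := fun m => Real.log m.factorial with hLdef
  set g : ℝ → ℝ := fun x => x - x * Real.log x - x * Real.log 2 with hgdef
  set T1 : ℕ → ℝ := fun n =>
    (L (a n) - L (a n - B n) - (B n : ℝ) * Real.log (a n)) / n with hT1def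
  set T2 : ℕ → ℝ := fun n =>
    ((B n : ℝ) / n) * (Real.log (a n) - 2 * Real.log n + Real.log 2) with hT2def
  set E : Fin k → ℕ → ℝ := fun i n =>
    (L (b i n) - ((b i n : ℝ) * Real.log (b i n) - (b i n : ℝ))) / n with hEdef
  set t : Fin k → ℕ → ℝ := fun i n => g ((b i n : ℝ) / n) - E i n with htdef
  have hBa : ∀ n, B n ≤ a n := hle
  -- log of multinomial
  have hM : ∀ n, Real.log ((Nat.multinomial Finset.univ
      (fun j : Option (Fin k) => j.elim (a n - B n) (fun i => b i n)) : ℕ) : ℝ)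
      = L (a n) - L (a n - B n) - ∑ i, L (b i n) := by
    intro n
    set f : Option (Fin k) → ℕ := fun j => j.elim (a n - B n) (fun i => b i n) with hfdef
    have hsum : ∑ j, f j = a n := by
      rw [Fintype.sum_option]
      simp only [hfdef, Option.elim]
      have hBn : ∑ i, b i n = B n := rfl
      rw [hBn]
      have := hBa n
      omega
    have hspec := Nat.multinomial_spec (univ : Finset (Option (Fin k))) f
    rw [hsum] at hspec
    have hcast : ((∏ j, (f j).factorial : ℕ) : ℝ) *
        ((Nat.multinomial univ f : ℕ) : ℝ) = ((a n).factorial : ℝ) := by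
      exact_mod_cast congrArg (Nat.cast : ℕ → ℝ) hspec
    have hprod_ne : ((∏ j, (f j).factorial : ℕ) : ℝ) ≠ 0 := by
      positivity
    have hmult_ne : ((Nat.multinomial univ f : ℕ) : ℝ) ≠ 0 := by
      exact_mod_cast (Nat.multinomial_pos univ f).ne'
    have hlogsum : Real.log ((a n).factorial : ℝ)
        = Real.log ((∏ j, (f j).factorial : ℕ) : ℝ)
          + Real.log ((Nat.multinomial univ f : ℕ) : ℝ) := by
      rw [← hcast, Real.log_mul hprod_ne hmult_ne]
    have hlogprod : Real.log ((∏ j, (f j).factorial : ℕ) : ℝ)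
        = L (a n - B n) + ∑ i, L (b i n) := by
      push_cast
      rw [Real.log_prod (fun j _ => by exact_mod_cast (f j).factorial_pos.ne')]
      rw [Fintype.sum_option]
      simp only [hfdef, Option.elim, hLdef]
    simp only [hLdef] at hlogsum hlogprod ⊢
    rw [hlogsum, hlogprod]
    ring
  -- basic limits
  have h1n : Tendsto (fun n : ℕ => 1 / (n:ℝ)) atTop (nhds 0) :=
    tendsto_one_div_atTop_nhds_zero_nat
  have hBlim : Tendsto (fun n => (B n : ℝ) / n) atTop (nhds β) := by
    have h := tendsto_finset_sum (univ : Finset (Fin k)) (fun i _ => hb i)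
    refine h.congr fun n => ?_
    rw [← Finset.sum_div]
    push_cast [hBdef]
    ring
  have hc : Tendsto (fun n : ℕ => 2 * (a n : ℝ) / (n:ℝ)^2) atTop (nhds 1) := by
    have hfrac : Tendsto (fun n : ℕ => 1 - 1/(n:ℝ)) atTop (nhds 1) := by
      simpa using tendsto_const_nhds.sub h1n
    have h := ha.mul hfrac
    rw [mul_one] at h
    refine h.congr' ?_
    filter_upwards [eventually_ge_atTop 2] with n hn
    have hn2 : (2:ℝ) ≤ (n:ℝ) := by exact_mod_cast hn
    have hne : (n:ℝ) ≠ 0 := by linarith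
    have hne1 : (n:ℝ) - 1 ≠ 0 := by linarith
    rw [Nat.cast_choose_two]
    field_simp
  have ha2 : Tendsto (fun n : ℕ => (a n : ℝ) / (n:ℝ)^2) atTop (nhds (1/2)) := by
    have := hc.div_const 2
    refine this.congr fun n => by ring
  have hB2 : Tendsto (fun n : ℕ => (B n : ℝ) / (n:ℝ)^2) atTop (nhds 0) := by
    have := hBlim.mul h1n
    rw [mul_zero] at this
    refine this.congr fun n => by ring
  have haB : Tendsto (fun n : ℕ => ((a n : ℝ) - (B n : ℝ)) / (n:ℝ)^2)
      atTop (nhds (1/2)) := by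
    have h := ha2.sub hB2
    rw [sub_zero] at h
    refine h.congr fun n => by ring
  have hapos : ∀ᶠ n in atTop, (0:ℝ) < 2 * (a n : ℝ) / (n:ℝ)^2 :=
    hc.eventually (eventually_gt_nhds (by norm_num : (0:ℝ) < 1))
  have hlogO : Tendsto (fun n : ℕ => Real.log (a n) - 2 * Real.log n + Real.log 2)
      atTop (nhds 0) := by
    have hlog1 := hc.log one_ne_zero
    rw [Real.log_one] at hlog1
    refine hlog1.congr' ?_
    filter_upwards [hapos, eventually_ge_atTop 1] with n hpos hn
    have hnp : (0:ℝ) < n := by exact_mod_cast hn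
    have hap : (0:ℝ) < (a n : ℝ) := by
      rcases Nat.eq_zero_or_pos (a n) with h0 | h
      · rw [h0] at hpos; norm_num at hpos
      · exact_mod_cast h
    rw [Real.log_div (by positivity) (by positivity),
      Real.log_mul two_ne_zero hap.ne', Real.log_pow]
    push_cast
    ring
  have hT2 : Tendsto T2 atTop (nhds 0) := by
    have := hBlim.mul hlogO
    rw [mul_zero] at this
    exact this
  -- eventual positivity of a - B
  have hEvPos : ∀ᶠ n in atTop, (1:ℝ) ≤ (a n : ℝ) - (B n : ℝ) ∧ (1:ℝ) ≤ (a n : ℝ)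
      ∧ (1:ℝ) ≤ (n:ℝ) := by
    filter_upwards [haB.eventually (eventually_gt_nhds (by norm_num : (1/4:ℝ) < 1/2)),
      eventually_ge_atTop 2] with n hq hn
    have hn2 : (2:ℝ) ≤ (n:ℝ) := by exact_mod_cast hn
    have hn0 : (0:ℝ) < (n:ℝ)^2 := by positivity
    have h4 : (n:ℝ)^2 / 4 ≤ (a n : ℝ) - (B n : ℝ) := by
      have := (lt_div_iff₀ hn0).mp hq
      linarith
    have h1 : (1:ℝ) ≤ (a n : ℝ) - (B n : ℝ) := by nlinarith
    have hB0 : (0:ℝ) ≤ (B n : ℝ) := by positivity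
    exact ⟨h1, by linarith, by linarith⟩
  have hT1 : Tendsto T1 atTop (nhds 0) := by
    have hnA : Tendsto (fun n : ℕ => (n:ℝ) / ((a n : ℝ) - (B n : ℝ))) atTop (nhds 0) := by
      have h := h1n.div haB (by norm_num : (1/2:ℝ) ≠ 0)
      rw [zero_div] at h
      refine h.congr' ?_
      filter_upwards [eventually_ge_atTop 1] with n hn
      have hne : (n:ℝ) ≠ 0 := by
        have : (1:ℝ) ≤ (n:ℝ) := by exact_mod_cast hn
        linarith
      simp only [Pi.div_apply]
      rw [div_div_eq_mul_div]
      congr 1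
      field_simp
    have hquot : Tendsto (fun n : ℕ => (B n : ℝ) / ((a n : ℝ) - (B n : ℝ)))
        atTop (nhds 0) := by
      have h := hBlim.mul hnA
      rw [mul_zero] at h
      refine h.congr' ?_
      filter_upwards [eventually_ge_atTop 1] with n hn
      have hne : (n:ℝ) ≠ 0 := by
        have : (1:ℝ) ≤ (n:ℝ) := by exact_mod_cast hn
        linarith
      rw [div_mul_div_comm, mul_comm (B n : ℝ), mul_div_mul_left _ _ hne]
    have hlo : Tendsto (fun n : ℕ => -(((B n : ℝ)/n) * ((B n : ℝ)/((a n:ℝ) - (B n:ℝ)))))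
        atTop (nhds 0) := by
      have h := (hBlim.mul hquot).neg
      rw [mul_zero, neg_zero] at h
      exact h
    refine tendsto_of_tendsto_of_tendsto_of_le_of_le' hlo tendsto_const_nhds ?_ ?_
    · -- lower bound
      filter_upwards [hEvPos] with n hn
      obtain ⟨hC, hA, hn1⟩ := hn
      have hnp : (0:ℝ) < n := by linarith
      have hCast : ((a n - B n : ℕ) : ℝ) = (a n : ℝ) - (B n : ℝ) := by
        exact_mod_cast Nat.cast_sub (hBa n)
      have hCpos : (0:ℝ) < (a n : ℝ) - (B n : ℝ) := by linarith
      have hApos : (0:ℝ) < (a n : ℝ) := by linarith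
      have hfl := Nat.factorial_mul_pow_le_factorial (m := a n - B n) (n := B n)
      rw [Nat.sub_add_cancel (hBa n)] at hfl
      have hfl' : ((a n - B n).factorial : ℝ) * (((a n - B n : ℕ) : ℝ) + 1) ^ (B n)
          ≤ ((a n).factorial : ℝ) := by exact_mod_cast hfl
      have hlog1 : L (a n - B n) + (B n : ℝ) * Real.log (((a n - B n : ℕ) : ℝ) + 1)
          ≤ L (a n) := by
        have h := Real.log_le_log (by positivity) hfl'
        rw [Real.log_mul (by positivity) (by positivity), Real.log_pow] at h
        simpa [hLdef] using h
      have hmono : Real.log ((a n : ℝ) - (B n : ℝ))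
          ≤ Real.log (((a n - B n : ℕ) : ℝ) + 1) := by
        apply Real.log_le_log hCpos
        rw [hCast]; linarith
      have hsub1 : Real.log (a n) - Real.log ((a n:ℝ) - (B n:ℝ))
          ≤ (B n : ℝ) / ((a n : ℝ) - (B n : ℝ)) := by
        rw [← Real.log_div hApos.ne' hCpos.ne']
        calc Real.log ((a n : ℝ)/((a n:ℝ) - (B n:ℝ)))
            ≤ (a n : ℝ)/((a n:ℝ) - (B n:ℝ)) - 1 :=
              Real.log_le_sub_one_of_pos (by positivity)
          _ = (B n : ℝ) / ((a n : ℝ) - (B n : ℝ)) := by field_simp; ring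
      have hB0 : (0:ℝ) ≤ (B n : ℝ) := by positivity
      have hnum : -((B n : ℝ) * ((B n : ℝ)/((a n:ℝ) - (B n:ℝ))))
          ≤ L (a n) - L (a n - B n) - (B n : ℝ) * Real.log (a n) := by
        nlinarith [hlog1, hmono, hsub1]
      calc -(((B n : ℝ)/n) * ((B n : ℝ)/((a n:ℝ) - (B n:ℝ))))
          = (-((B n : ℝ) * ((B n : ℝ)/((a n:ℝ) - (B n:ℝ))))) / n := by ring
        _ ≤ (L (a n) - L (a n - B n) - (B n : ℝ) * Real.log (a n)) / n :=
            (div_le_div_iff_of_pos_right hnp).mpr hnum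
        _ = T1 n := by rw [hT1def]
    · -- upper bound
      filter_upwards [hEvPos] with n hn
      obtain ⟨hC, hA, hn1⟩ := hn
      have hnp : (0:ℝ) < n := by linarith
      have hApos : (0:ℝ) < (a n : ℝ) := by linarith
      have hfu := fact_upper (a n - B n) (B n)
      rw [Nat.sub_add_cancel (hBa n)] at hfu
      have hfu' : ((a n).factorial : ℝ) ≤ ((a n - B n).factorial : ℝ) * (a n : ℝ)^(B n) := by
        exact_mod_cast hfu
      have hlog2 : L (a n) ≤ L (a n - B n) + (B n : ℝ) * Real.log (a n) := by
        have h := Real.log_le_log (by positivity) hfu'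
        rw [Real.log_mul (by positivity) (by positivity), Real.log_pow] at h
        simpa [hLdef] using h
      have hnum : L (a n) - L (a n - B n) - (B n : ℝ) * Real.log (a n) ≤ 0 := by
        linarith
      have : T1 n = (L (a n) - L (a n - B n) - (B n : ℝ) * Real.log (a n)) / n := by
        rw [hT1def]
      rw [this]
      exact div_nonpos_of_nonpos_of_nonneg hnum hnp.le
  -- E i → 0
  have hE : ∀ i, Tendsto (E i) atTop (nhds 0) := by
    intro i
    have hsq : Tendsto (fun n : ℕ => Real.sqrt (b i n) / (n:ℝ)) atTop (nhds 0) := by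
      have h1 : Tendsto (fun n : ℕ => ((b i n : ℝ)/n) * (1/n)) atTop (nhds 0) := by
        have := (hb i).mul h1n
        rwa [mul_zero] at this
      have h2 := (Real.continuous_sqrt.tendsto 0).comp h1
      rw [Real.sqrt_zero] at h2
      refine h2.congr fun n => ?_
      show Real.sqrt ((b i n : ℝ)/n * (1/n)) = Real.sqrt (b i n) / n
      rw [show (b i n : ℝ)/n * (1/n) = (b i n : ℝ) / (n:ℝ)^2 by ring,
        Real.sqrt_div (by positivity), Real.sqrt_sq (by positivity)]
    have hu : Tendsto (fun n : ℕ => 2 * (Real.sqrt (b i n) / n) + 1/n) atTop (nhds 0) := by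
      have := (hsq.const_mul 2).add h1n
      rwa [mul_zero, add_zero] at this
    refine tendsto_of_tendsto_of_tendsto_of_le_of_le' tendsto_const_nhds hu ?_ ?_
    · filter_upwards [eventually_ge_atTop 1] with n hn
      have hnp : (0:ℝ) < n := by exact_mod_cast hn
      have h := log_fact_ge (b i n)
      have : E i n = (L (b i n) - ((b i n : ℝ) * Real.log (b i n) - (b i n : ℝ))) / n := by
        rw [hEdef]
      rw [this]
      apply div_nonneg _ hnp.le
      simp only [hLdef]
      linarith
    · filter_upwards [eventually_ge_atTop 1] with n hn
      have hnp : (0:ℝ) < n := by exact_mod_cast hn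
      have h := log_fact_le (b i n)
      have hls : Real.log (b i n) ≤ 2 * Real.sqrt (b i n) := log_le_two_sqrt (by positivity)
      have : E i n = (L (b i n) - ((b i n : ℝ) * Real.log (b i n) - (b i n : ℝ))) / n := by
        rw [hEdef]
      rw [this]
      rw [show 2 * (Real.sqrt (b i n) / n) + 1/n = (2 * Real.sqrt (b i n) + 1)/n by ring]
      apply (div_le_div_iff_of_pos_right hnp).mpr
      simp only [hLdef]
      linarith
  -- g part
  have hgc : Continuous g := by
    rw [hgdef]
    exact (continuous_id.sub Real.continuous_mul_log).sub (continuous_id.mul continuous_const)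
  have hglim : ∀ i, Tendsto (fun n => g ((b i n : ℝ)/n)) atTop (nhds (g (bb i))) :=
    fun i => (hgc.tendsto (bb i)).comp (hb i)
  have ht : ∀ i, Tendsto (t i) atTop (nhds (g (bb i))) := by
    intro i
    have := (hglim i).sub (hE i)
    rw [sub_zero] at this
    exact this
  have hsumt : Tendsto (fun n => ∑ i, t i n) atTop (nhds (∑ i, g (bb i))) :=
    tendsto_finset_sum _ (fun i _ => ht i)
  have htotal : Tendsto (fun n => T1 n + T2 n + ∑ i, t i n) atTop
      (nhds (∑ i, g (bb i))) := by
    have h := (hT1.add hT2).add hsumt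
    rwa [add_zero, zero_add] at h
  have hval : (∑ i, g (bb i)) = ∑ i, sFun (2 * bb i) := by
    refine Finset.sum_congr rfl fun i _ => ?_
    rw [hgdef]
    exact g_eq_sFun (hbb i)
  rw [hval] at htotal
  refine htotal.congr' ?_
  filter_upwards [eventually_ge_atTop 1] with n hn
  have hnp : (0:ℝ) < n := by exact_mod_cast hn
  have hBcast : (∑ i, (b i n : ℝ)) = (B n : ℝ) := by
    rw [hBdef]; push_cast; ring
  have hti : ∀ i, t i n = ((b i n : ℝ) * (Real.log n - Real.log 2) - L (b i n)) / n := by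
    intro i
    have hexp : t i n = g ((b i n : ℝ)/n) - E i n := by rw [htdef]
    rcases Nat.eq_zero_or_pos (b i n) with h0 | hpos
    · simp [hexp, hgdef, hEdef, hLdef, h0]
    · have hbp : (0:ℝ) < (b i n : ℝ) := by exact_mod_cast hpos
      rw [hexp, hgdef, hEdef]
      simp only
      rw [Real.log_div hbp.ne' hnp.ne']
      field_simp
      ring
  rw [Finset.sum_congr rfl (fun i _ => hti i)]
  rw [← Finset.sum_div, Finset.sum_sub_distrib, ← Finset.sum_mul, hBcast]
  rw [hM n, hT1def, hT2def]
  simp only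
  field_simp
  ring

end
end

section
/- Let X be an integer-valued random variable taking values in {0,…,Δ} and let 0 ≤ ε ≤ 1. Let {Y_i}_{i≥1} be i.i.d. Bernoulli(ε) random variables independent of X, and define X_1 := Σ_{i=1}^X Y_i and X_2 := X − X_1. Then H(X_1, X_2) = H(X) + E[X]·H(Y_1) − E[ log binom(X, X_1) ], where H(Y_1) = −ε log ε − (1−ε) log(1−ε) is the binary entropy of Y_1. -/
open Filter Finset

open scoped Classical

noncomputable section

lemma binom_sum (k : ℕ) (x y : ℝ) :
    ∑ l ∈ range (k+1), (k.choose l : ℝ) * x^l * y^(k-l) = (x+y)^k := by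
  rw [add_pow]
  exact Finset.sum_congr rfl fun l _ => by ring

lemma binom_mean (k : ℕ) (x y : ℝ) :
    ∑ l ∈ range (k+1), (l:ℝ) * (k.choose l : ℝ) * x^l * y^(k-l)
      = k * x * (x+y)^(k-1) := by
  cases k with
  | zero => simp
  | succ n =>
    rw [Finset.sum_range_succ']
    have key : ∀ j : ℕ, ((j:ℝ)+1) * ((n+1).choose (j+1) : ℝ) = ((n:ℝ)+1) * (n.choose j : ℝ) := by
      intro j
      have h := Nat.add_one_mul_choose_eq n j
      have h2 : ((Nat.succ n * n.choose j : ℕ) : ℝ) = ((Nat.succ n).choose j.succ * j.succ : ℕ) := by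
        rw [h]
      push_cast at h2
      linarith
    have : ∑ j ∈ range (n+1), ((j:ℝ)+1) * ((n+1).choose (j+1) : ℝ) * x^(j+1) * y^(n+1-(j+1))
        = (n+1) * x * (x+y)^n := by
      rw [← binom_sum n x y, Finset.mul_sum]
      refine Finset.sum_congr rfl fun j _ => ?_
      rw [key j]
      have : n + 1 - (j+1) = n - j := by omega
      rw [this]
      ring
    simpa using this

lemma reindex_tri (Δ : ℕ) (F : ℕ → ℕ → ℝ) (h0 : ∀ l m, Δ < l + m → F l m = 0) :
    ∑ lm : Fin (Δ+1) × Fin (Δ+1), F lm.1 lm.2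
      = ∑ k ∈ range (Δ+1), ∑ l ∈ range (k+1), F l (k-l) := by
  have h1 : ∑ lm : Fin (Δ+1) × Fin (Δ+1), F lm.1 lm.2
      = ∑ p ∈ (range (Δ+1)) ×ˢ (range (Δ+1)), F p.1 p.2 := by
    rw [Fintype.sum_prod_type, Finset.sum_product]
    rw [Fin.sum_univ_eq_sum_range (fun l => ∑ m : Fin (Δ+1), F l m)]
    exact Finset.sum_congr rfl fun l _ =>
      Fin.sum_univ_eq_sum_range (fun m => F l m) (Δ+1)
  have h2 : ∑ p ∈ (range (Δ+1)) ×ˢ (range (Δ+1)), F p.1 p.2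
      = ∑ p ∈ ((range (Δ+1)) ×ˢ (range (Δ+1))).filter (fun p => p.1 + p.2 ≤ Δ), F p.1 p.2 := by
    rw [← Finset.sum_filter_add_sum_filter_not _ (fun p => p.1 + p.2 ≤ Δ)]
    have : ∑ p ∈ ((range (Δ+1)) ×ˢ (range (Δ+1))).filter (fun p => ¬ p.1 + p.2 ≤ Δ), F p.1 p.2 = 0 := by
      apply Finset.sum_eq_zero
      intro p hp
      simp only [Finset.mem_filter, not_le] at hp
      exact h0 p.1 p.2 hp.2
    rw [this, add_zero]
  rw [h1, h2, Finset.sum_sigma' (range (Δ+1)) (fun k => range (k+1)) (fun k l => F l (k-l))]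
  apply Finset.sum_nbij' (i := fun (p : ℕ × ℕ) => (⟨p.1 + p.2, p.1⟩ : Σ _ : ℕ, ℕ))
    (j := fun (x : Σ _ : ℕ, ℕ) => (x.2, x.1 - x.2))
  · intro p hp
    simp only [Finset.mem_filter, Finset.mem_product, Finset.mem_range] at hp
    simp only [Finset.mem_sigma, Finset.mem_range]
    omega
  · intro x hx
    simp only [Finset.mem_sigma, Finset.mem_range] at hx
    simp only [Finset.mem_filter, Finset.mem_product, Finset.mem_range]
    omega
  · intro p hp; simp
  · intro x hx
    simp only [Finset.mem_sigma, Finset.mem_range] at hx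
    have : x.2 + (x.1 - x.2) = x.1 := by omega
    exact Sigma.ext this (by simp)
  · intro p hp; simp

lemma term_split (pk : ℝ) (hpk : 0 ≤ pk) (k l : ℕ) (ε : ℝ) (hε0 : 0 ≤ ε) (hε1 : ε ≤ 1) :
    (pk * (k.choose l : ℝ) * ε^l * (1-ε)^(k-l))
      * Real.log (pk * (k.choose l : ℝ) * ε^l * (1-ε)^(k-l))
    = (pk * (k.choose l : ℝ) * ε^l * (1-ε)^(k-l)) * Real.log pk
      + (pk * (k.choose l : ℝ) * ε^l * (1-ε)^(k-l)) * Real.log (k.choose l : ℝ)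
      + (pk * (k.choose l : ℝ) * ε^l * (1-ε)^(k-l)) * ((l:ℝ) * Real.log ε)
      + (pk * (k.choose l : ℝ) * ε^l * (1-ε)^(k-l)) * (((k-l:ℕ):ℝ) * Real.log (1-ε)) := by
  set P := pk * (k.choose l : ℝ) * ε^l * (1-ε)^(k-l) with hP
  by_cases h : P = 0
  · rw [h]; ring
  · have h1 : pk ≠ 0 := by intro h1; apply h; rw [hP, h1]; ring
    have h2 : (k.choose l : ℝ) ≠ 0 := by intro h2; apply h; rw [hP, h2]; ring
    have h3 : ε^l ≠ 0 := by intro h3; apply h; rw [hP, h3]; ring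
    have h4 : (1-ε)^(k-l) ≠ 0 := by intro h4; apply h; rw [hP, h4]; ring
    rw [hP, Real.log_mul (by positivity) h4, Real.log_mul (by positivity) h3,
      Real.log_mul h1 h2, Real.log_pow, Real.log_pow]
    push_cast
    ring

lemma per_k (pk : ℝ) (hpk : 0 ≤ pk) (k : ℕ) (ε : ℝ) (hε0 : 0 ≤ ε) (hε1 : ε ≤ 1) :
    ∑ l ∈ range (k+1), (pk * (k.choose l : ℝ) * ε^l * (1-ε)^(k-l))
        * Real.log (pk * (k.choose l : ℝ) * ε^l * (1-ε)^(k-l))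
    = pk * Real.log pk
      + (∑ l ∈ range (k+1), pk * (k.choose l : ℝ) * ε^l * (1-ε)^(k-l)
          * Real.log (k.choose l : ℝ))
      + (k:ℝ) * pk * (ε * Real.log ε + (1-ε) * Real.log (1-ε)) := by
  have h1 : ε + (1-ε) = 1 := by ring
  have hB : ∑ l ∈ range (k+1), (k.choose l : ℝ) * ε^l * (1-ε)^(k-l) = 1 := by
    rw [binom_sum, h1, one_pow]
  have hM : ∑ l ∈ range (k+1), (l:ℝ) * (k.choose l : ℝ) * ε^l * (1-ε)^(k-l) = k * ε := by
    rw [binom_mean, h1, one_pow, mul_one]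
  rw [Finset.sum_congr rfl (fun l _ => term_split pk hpk k l ε hε0 hε1),
    Finset.sum_add_distrib, Finset.sum_add_distrib, Finset.sum_add_distrib]
  have e1 : ∑ l ∈ range (k+1),
      (pk * (k.choose l : ℝ) * ε^l * (1-ε)^(k-l)) * Real.log pk = pk * Real.log pk := by
    have : ∀ l ∈ range (k+1), (pk * (k.choose l : ℝ) * ε^l * (1-ε)^(k-l)) * Real.log pk
        = (pk * Real.log pk) * ((k.choose l : ℝ) * ε^l * (1-ε)^(k-l)) := fun l _ => by ring
    rw [Finset.sum_congr rfl this, ← Finset.mul_sum, hB, mul_one]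
  have e3 : ∑ l ∈ range (k+1),
      (pk * (k.choose l : ℝ) * ε^l * (1-ε)^(k-l)) * ((l:ℝ) * Real.log ε)
      = pk * Real.log ε * ((k:ℝ) * ε) := by
    have : ∀ l ∈ range (k+1),
        (pk * (k.choose l : ℝ) * ε^l * (1-ε)^(k-l)) * ((l:ℝ) * Real.log ε)
        = (pk * Real.log ε) * ((l:ℝ) * (k.choose l : ℝ) * ε^l * (1-ε)^(k-l)) := fun l _ => by ring
    rw [Finset.sum_congr rfl this, ← Finset.mul_sum, hM]
  have e4 : ∑ l ∈ range (k+1),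
      (pk * (k.choose l : ℝ) * ε^l * (1-ε)^(k-l)) * (((k-l:ℕ):ℝ) * Real.log (1-ε))
      = pk * Real.log (1-ε) * ((k:ℝ) * (1-ε)) := by
    have step : ∀ l ∈ range (k+1),
        (pk * (k.choose l : ℝ) * ε^l * (1-ε)^(k-l)) * (((k-l:ℕ):ℝ) * Real.log (1-ε))
        = (pk * Real.log (1-ε)) * ((k:ℝ) * ((k.choose l : ℝ) * ε^l * (1-ε)^(k-l)))
          - (pk * Real.log (1-ε)) * ((l:ℝ) * (k.choose l : ℝ) * ε^l * (1-ε)^(k-l)) := by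
      intro l hl
      rw [Nat.cast_sub (Finset.mem_range_succ_iff.mp hl)]
      ring
    rw [Finset.sum_congr rfl step, Finset.sum_sub_distrib, ← Finset.mul_sum, ← Finset.mul_sum,
      ← Finset.mul_sum, hB, hM]
    ring
  rw [e1, e3, e4]
  have e2 : ∑ l ∈ range (k+1),
      (pk * (k.choose l : ℝ) * ε^l * (1-ε)^(k-l)) * Real.log (k.choose l : ℝ)
      = ∑ l ∈ range (k+1), pk * (k.choose l : ℝ) * ε^l * (1-ε)^(k-l)
          * Real.log (k.choose l : ℝ) := rfl
  rw [e2]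
  ring

/-- the thinning entropy identity
`H(X₁, X₂) = H(X) + E[X]·H(Y₁) - E[log C(X, X₁)]`, where `X ∼ pX` takes values in
`{0,…,Δ}`, `X₁` is an i.i.d. `Bernoulli(ε)` thinning of `X` and `X₂ = X - X₁`;
the joint law of `(X₁,X₂)` is `P(X₁=l, X₂=m) = pX(l+m)·C(l+m,l)·ε^l·(1-ε)^m`. -/
theorem thinning_entropy (Δ : ℕ) (pX : ℕ → ℝ) (hpX0 : ∀ k, 0 ≤ pX k)
    (hsupp : ∀ k, Δ < k → pX k = 0) (hsum : ∑ k ∈ Finset.range (Δ + 1), pX k = 1)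
    (ε : ℝ) (hε0 : 0 ≤ ε) (hε1 : ε ≤ 1) :
    shannonEntropy (fun lm : Fin (Δ + 1) × Fin (Δ + 1) =>
        pX ((lm.1 : ℕ) + (lm.2 : ℕ)) * (((lm.1 : ℕ) + (lm.2 : ℕ)).choose (lm.1 : ℕ) : ℝ)
          * ε ^ (lm.1 : ℕ) * (1 - ε) ^ (lm.2 : ℕ))
      = (- ∑ k ∈ Finset.range (Δ + 1), pX k * Real.log (pX k))
        + (∑ k ∈ Finset.range (Δ + 1), (k : ℝ) * pX k)
            * (-(ε * Real.log ε) - (1 - ε) * Real.log (1 - ε))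
        - ∑ k ∈ Finset.range (Δ + 1), ∑ l ∈ Finset.range (k + 1),
            pX k * (k.choose l : ℝ) * ε ^ l * (1 - ε) ^ (k - l)
              * Real.log (k.choose l : ℝ) := by
  unfold shannonEntropy
  rw [reindex_tri Δ (fun l m => (pX (l+m) * ((l+m).choose l : ℝ) * ε^l * (1-ε)^m)
        * Real.log (pX (l+m) * ((l+m).choose l : ℝ) * ε^l * (1-ε)^m))
      (fun l m h => by simp [hsupp _ h])]
  have hin : ∀ k ∈ range (Δ+1),
      (∑ l ∈ range (k+1), (pX (l+(k-l)) * ((l+(k-l)).choose l : ℝ) * ε^l * (1-ε)^(k-l))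
        * Real.log (pX (l+(k-l)) * ((l+(k-l)).choose l : ℝ) * ε^l * (1-ε)^(k-l)))
      = pX k * Real.log (pX k)
        + (∑ l ∈ range (k+1), pX k * (k.choose l : ℝ) * ε^l * (1-ε)^(k-l)
            * Real.log (k.choose l : ℝ))
        + (k:ℝ) * pX k * (ε * Real.log ε + (1-ε) * Real.log (1-ε)) := by
    intro k _
    have : ∀ l ∈ range (k+1),
        (pX (l+(k-l)) * ((l+(k-l)).choose l : ℝ) * ε^l * (1-ε)^(k-l))
          * Real.log (pX (l+(k-l)) * ((l+(k-l)).choose l : ℝ) * ε^l * (1-ε)^(k-l))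
        = (pX k * (k.choose l : ℝ) * ε^l * (1-ε)^(k-l))
          * Real.log (pX k * (k.choose l : ℝ) * ε^l * (1-ε)^(k-l)) := by
      intro l hl
      have h : l + (k - l) = k := by
        have := Finset.mem_range_succ_iff.mp hl; omega
      rw [h]
    rw [Finset.sum_congr rfl this]
    exact per_k (pX k) (hpX0 k) k ε hε0 hε1
  rw [Finset.sum_congr rfl hin, Finset.sum_add_distrib, Finset.sum_add_distrib,
    ← Finset.sum_mul]
  ring


end
end

section
/- Let G^(n)_{1,2} ∼ G(n;p,q) and let H(G^(n)_{1,2}) denote its Shannon entropy. Then H(G^(n)_{1,2}) = (d12/2) n log n + n ( H(Q) + Σ_{x∈Ξ12} s(p_x) ) + o(n), where d12 := Σ_{x∈Ξ12} p_x, Q ∼ q, and s(x) := x/2 − (x/2) log x for x > 0, s(0) := 0. -/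
open Filter Finset

open scoped Classical

noncomputable section

theorem entropy_equiv {α β : Type*} [Fintype α] [Fintype β] (e : α ≃ β) (P : β → ℝ) :
    shannonEntropy (fun a => P (e a)) = shannonEntropy P := by
  unfold shannonEntropy
  rw [← Equiv.sum_comp e (fun b => P b * Real.log (P b))]

theorem entropy_prod_two {α β : Type*} [Fintype α] [Fintype β] (P : α → ℝ) (Q : β → ℝ)
    (hP : ∑ a, P a = 1) (hQ : ∑ b, Q b = 1) :
    shannonEntropy (fun ab : α × β => P ab.1 * Q ab.2) = shannonEntropy P + shannonEntropy Q := by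
  unfold shannonEntropy
  rw [Fintype.sum_prod_type]
  have key : ∀ a b, P a * Q b * Real.log (P a * Q b)
      = (P a * Real.log (P a)) * Q b + P a * (Q b * Real.log (Q b)) := by
    intro a b
    by_cases h1 : P a = 0
    · simp [h1]
    by_cases h2 : Q b = 0
    · simp [h2]
    · rw [Real.log_mul h1 h2]; ring
  simp only [key, Finset.sum_add_distrib, ← Finset.sum_mul, ← Finset.mul_sum, hP, hQ]
  ring

theorem entropy_pi {ι : Type*} [Fintype ι] {α : ι → Type*} [∀ i, Fintype (α i)]
    (f : ∀ i, α i → ℝ) (hf : ∀ i, ∑ a, f i a = 1) :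
    shannonEntropy (fun g : ∀ i, α i => ∏ i, f i (g i)) = ∑ i, shannonEntropy (f i) := by
  have key : ∀ g : ∀ i, α i, (∏ i, f i (g i)) * Real.log (∏ i, f i (g i))
      = ∑ i, (∏ j, f j (g j)) * Real.log (f i (g i)) := by
    intro g
    by_cases h : ∃ i, f i (g i) = 0
    · obtain ⟨i, hi⟩ := h
      have hz : (∏ j, f j (g j)) = 0 := Finset.prod_eq_zero (mem_univ i) hi
      simp [hz]
    · push_neg at h
      rw [Real.log_prod (fun i _ => h i), Finset.mul_sum]
  have main : ∑ g : ∀ i, α i, (∏ i, f i (g i)) * Real.log (∏ i, f i (g i))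
      = ∑ i, ∑ a, f i a * Real.log (f i a) := by
    simp_rw [key]
    rw [Finset.sum_comm]
    refine Finset.sum_congr rfl (fun i _ => ?_)
    set F : ∀ j, α j → ℝ := fun j a => if j = i then f j a * Real.log (f j a) else f j a with hF
    have step : ∀ g : ∀ i, α i, (∏ j, f j (g j)) * Real.log (f i (g i))
        = ∏ j, F j (g j) := by
      intro g
      rw [Finset.prod_eq_mul_prod_sdiff_singleton_of_mem (mem_univ i) (fun j => F j (g j)),
        Finset.prod_eq_mul_prod_sdiff_singleton_of_mem (mem_univ i) (fun j => f j (g j))]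
      have h2 : ∏ j ∈ univ \ {i}, F j (g j) = ∏ j ∈ univ \ {i}, f j (g j) :=
        Finset.prod_congr rfl (fun j hj =>
          if_neg (by simpa using (Finset.mem_sdiff.mp hj).2))
      rw [h2, hF]
      simp only [eq_self_iff_true, if_true]
      ring
    simp_rw [step]
    rw [← Fintype.piFinset_univ, ← Finset.prod_univ_sum]
    rw [Finset.prod_eq_mul_prod_sdiff_singleton_of_mem (mem_univ i) (fun j => ∑ a ∈ univ, F j a)]
    have h3 : ∏ j ∈ univ \ {i}, ∑ a ∈ univ, F j a = 1 := by
      refine Finset.prod_eq_one (fun j hj => ?_)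
      have hji : j ≠ i := by simpa using (Finset.mem_sdiff.mp hj).2
      have he : ∀ a : α j, F j a = f j a := fun a => if_neg hji
      simp_rw [he]
      exact hf j
    rw [h3, mul_one, hF]
    simp only [eq_self_iff_true, if_true]
  unfold shannonEntropy
  rw [main, ← Finset.sum_neg_distrib]

theorem card_pairs_mul_two (n : ℕ) :
    (Fintype.card {pr : Fin n × Fin n // pr.1 < pr.2}) * 2 = n * (n - 1) := by
  rw [Fintype.card_subtype]
  have h1 : (univ.filter (fun pr : Fin n × Fin n => pr.1 < pr.2)).card
      = ∑ pr : Fin n × Fin n, if pr.1 < pr.2 then 1 else 0 := Finset.card_filter _ _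
  rw [h1, Fintype.sum_prod_type, Finset.sum_comm]
  have h2 : ∀ j : Fin n, (∑ i : Fin n, if i < j then 1 else 0) = (j : ℕ) := by
    intro j
    rw [← Finset.card_filter]
    have : (univ.filter (fun i : Fin n => i < j)) = Finset.Iio j := by
      ext i; simp
    rw [this, Fin.card_Iio]
  simp_rw [h2]
  rw [Fin.sum_univ_eq_sum_range (fun i => i) n]
  exact Finset.sum_range_id_mul_two n

/-- The unfolding equivalence for marked graphs. -/
def graphEquiv (n : ℕ) (Ξ Θ : Type) :
    MarkedGraph n Ξ Θ ≃ (({pr : Fin n × Fin n // pr.1 < pr.2} → Option Ξ) × (Fin n → Θ)) where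
  toFun G := (fun pr => G.1.1 pr.1.1 pr.1.2, G.1.2)
  invFun fv :=
    ⟨(fun i j => if h : i < j then fv.1 ⟨(i, j), h⟩ else
        if h' : j < i then fv.1 ⟨(j, i), h'⟩ else none, fv.2), by
      intro i j
      dsimp only
      rcases lt_trichotomy i j with h | h | h
      · rw [dif_pos h, dif_neg (not_lt.2 h.le), dif_pos h]
      · subst h; rfl
      · rw [dif_neg (not_lt.2 h.le), dif_pos h, dif_pos h], by
      intro i
      dsimp only
      rw [dif_neg (lt_irrefl i), dif_neg (lt_irrefl i)]⟩
  left_inv G := by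
    apply Subtype.ext
    refine Prod.ext ?_ rfl
    funext i j
    dsimp only
    rcases lt_trichotomy i j with h | h | h
    · rw [dif_pos h]
    · subst h
      rw [dif_neg (lt_irrefl i), dif_neg (lt_irrefl i)]
      exact (G.2.2 i).symm
    · rw [dif_neg (not_lt.2 h.le), dif_pos h, G.2.1 i j]
  right_inv fv := by
    refine Prod.ext ?_ rfl
    funext pr
    dsimp only
    rw [dif_pos pr.2]

set_option maxHeartbeats 2000000 in
theorem er_formula {Ξ1 Ξ2 Θ1 Θ2 : Type} [Fintype Ξ1] [Fintype Ξ2] [Fintype Θ1] [Fintype Θ2]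
    (pe : JointEdgeMark Ξ1 Ξ2 → ℝ) (q : Θ1 × Θ2 → ℝ) (hq : ∑ θ, q θ = 1)
    (n : ℕ) (hn : 1 ≤ n) :
    shannonEntropy (erProb (Θ1 := Θ1) (Θ2 := Θ2) n pe q)
      = (Fintype.card {pr : Fin n × Fin n // pr.1 < pr.2} : ℝ) *
          shannonEntropy (fun o : Option (JointEdgeMark Ξ1 Ξ2) =>
            o.elim (1 - (∑ x, pe x) / n) (fun x => pe x / n))
        + n * shannonEntropy q := by
  have hn0 : (n : ℝ) ≠ 0 := Nat.cast_ne_zero.2 (by omega)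
  set F : Option (JointEdgeMark Ξ1 Ξ2) → ℝ :=
    fun o => o.elim (1 - (∑ x, pe x) / n) (fun x => pe x / n) with hFdef
  have hFs : ∑ o, F o = 1 := by
    rw [Fintype.sum_option]
    have h1 : ∑ a : JointEdgeMark Ξ1 Ξ2, F (some a) = (∑ x, pe x) / n := by
      show ∑ a : JointEdgeMark Ξ1 Ξ2, pe a / (n : ℝ) = _
      rw [← Finset.sum_div]
    rw [h1]
    show 1 - (∑ x, pe x) / (n : ℝ) + (∑ x, pe x) / (n : ℝ) = 1
    ring
  set e := graphEquiv n (JointEdgeMark Ξ1 Ξ2) (Θ1 × Θ2) with he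
  set P : (({pr : Fin n × Fin n // pr.1 < pr.2} → Option (JointEdgeMark Ξ1 Ξ2))
      × (Fin n → Θ1 × Θ2)) → ℝ :=
    fun fv => (∏ pr, F (fv.1 pr)) * ∏ i, q (fv.2 i) with hPdef
  have hrepr : erProb (Θ1 := Θ1) (Θ2 := Θ2) n pe q = fun H => P (e H) := by
    funext H
    show _ = (∏ pr, F ((e H).1 pr)) * ∏ i, q ((e H).2 i)
    unfold erProb
    congr 1
    exact Finset.prod_subtype _ (fun x => by simp) _
  have hs1 : ∑ f : {pr : Fin n × Fin n // pr.1 < pr.2} → Option (JointEdgeMark Ξ1 Ξ2),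
      ∏ pr, F (f pr) = 1 := by
    rw [← Fintype.piFinset_univ, ← Finset.prod_univ_sum]
    simp [hFs]
  have hs2 : ∑ v : Fin n → Θ1 × Θ2, ∏ i, q (v i) = 1 := by
    rw [← Fintype.piFinset_univ, ← Finset.prod_univ_sum]
    simp [hq]
  have e1 : shannonEntropy (fun f : {pr : Fin n × Fin n // pr.1 < pr.2} →
        Option (JointEdgeMark Ξ1 Ξ2) => ∏ pr, F (f pr))
      = (Fintype.card {pr : Fin n × Fin n // pr.1 < pr.2} : ℝ) * shannonEntropy F := by
    have h := entropy_pi (fun _ : {pr : Fin n × Fin n // pr.1 < pr.2} => F) (fun _ => hFs)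
    rw [Finset.sum_const, Finset.card_univ, nsmul_eq_mul] at h
    convert h using 2
  have e2 : shannonEntropy (fun v : Fin n → Θ1 × Θ2 => ∏ i, q (v i))
      = (n : ℝ) * shannonEntropy q := by
    have h := entropy_pi (fun _ : Fin n => q) (fun _ => hq)
    rw [Finset.sum_const, Finset.card_univ, Fintype.card_fin, nsmul_eq_mul] at h
    convert h using 2
  rw [hrepr, entropy_equiv e P, ← e1, ← e2]
  convert entropy_prod_two (fun f : {pr : Fin n × Fin n // pr.1 < pr.2} →
      Option (JointEdgeMark Ξ1 Ξ2) => ∏ pr, F (f pr))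
    (fun v : Fin n → Θ1 × Θ2 => ∏ i, q (v i)) hs1 hs2 using 2

/-- asymptotics of the Shannon entropy of the marked
Erdős–Rényi ensemble. -/
theorem er_entropy_asymptotics {Ξ1 Ξ2 Θ1 Θ2 : Type}
    [Fintype Ξ1] [Fintype Ξ2] [Fintype Θ1] [Fintype Θ2]
    (pe : JointEdgeMark Ξ1 Ξ2 → ℝ) (hpe : ∀ x, 0 ≤ pe x) (hpos : 0 < erD12 pe)
    (q : Θ1 × Θ2 → ℝ) (hq : IsProbVec q) :
    Tendsto (fun n : ℕ =>
        (shannonEntropy (erProb (Θ1 := Θ1) (Θ2 := Θ2) n pe q)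
          - erD12 pe / 2 * n * Real.log n - n * erSigma12 pe q) / n)
      atTop (nhds 0) := by
  obtain ⟨hq0, hq1⟩ := hq
  have hcast : Tendsto (fun n : ℕ => (n : ℝ)) atTop atTop := tendsto_natCast_atTop_atTop
  have h1 : Tendsto (fun n : ℕ => ((n : ℝ))⁻¹) atTop (nhds 0) :=
    tendsto_inv_atTop_zero.comp hcast
  have hL1 : Tendsto (fun n : ℕ => (n : ℝ) * Real.log (1 - (∑ x, pe x) / n)) atTop
      (nhds (-(∑ x, pe x))) := by
    have h := (Real.tendsto_mul_log_one_add_div_atTop (-(∑ x, pe x))).comp hcast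
    simpa [Function.comp_def, neg_div, ← sub_eq_add_neg] using h
  have hlog : Tendsto (fun n : ℕ => Real.log n * ((n : ℝ))⁻¹) atTop (nhds 0) := by
    have h0 : Tendsto (fun x : ℝ => Real.log x / x) atTop (nhds 0) := by
      simpa using Real.isLittleO_log_id_atTop.tendsto_div_nhds_zero
    have h := h0.comp hcast
    simpa [Function.comp_def, div_eq_mul_inv] using h
  set g : ℕ → ℝ := fun n =>
    (-((1 - ((n : ℝ))⁻¹) / 2) * (1 - (∑ x, pe x) * ((n : ℝ))⁻¹) *
        ((n : ℝ) * Real.log (1 - (∑ x, pe x) / n)) - (∑ x, pe x) / 2)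
      + ((∑ x, pe x * Real.log (pe x)) / 2) * ((n : ℝ))⁻¹
      - ((∑ x, pe x) / 2) * (Real.log n * ((n : ℝ))⁻¹) with hgdef
  have hg0 : Tendsto g atTop (nhds 0) := by
    have key : Tendsto g atTop (nhds (
        (-((1 - (0 : ℝ)) / 2) * (1 - (∑ x, pe x) * 0) * (-(∑ x, pe x)) - (∑ x, pe x) / 2)
        + ((∑ x, pe x * Real.log (pe x)) / 2) * 0
        - ((∑ x, pe x) / 2) * 0)) := by
      refine Tendsto.sub (Tendsto.add (Tendsto.sub ?_ tendsto_const_nhds) ?_) ?_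
      · exact (((tendsto_const_nhds.sub h1).div_const 2).neg.mul
          (tendsto_const_nhds.sub (h1.const_mul _))).mul hL1
      · exact h1.const_mul _
      · exact hlog.const_mul _
    convert key using 2
    ring
  refine Tendsto.congr' ?_ hg0
  filter_upwards [Filter.eventually_ge_atTop 1] with n hn
  have hn0 : ((n : ℝ)) ≠ 0 := Nat.cast_ne_zero.2 (by omega)
  have hSig : erSigma12 pe q = shannonEntropy q
      + ((∑ x, pe x) / 2 - (∑ x, pe x * Real.log (pe x)) / 2) := by
    unfold erSigma12 sFun
    congr 1
    rw [Finset.sum_sub_distrib, Finset.sum_div, Finset.sum_div]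
    congr 1 <;> exact Finset.sum_congr rfl (fun x _ => by ring)
  have hcardn : ((Fintype.card {pr : Fin n × Fin n // pr.1 < pr.2} : ℕ) : ℝ)
      = (n : ℝ) * ((n : ℝ) - 1) / 2 := by
    have h := congrArg (fun k : ℕ => (k : ℝ)) (card_pairs_mul_two n)
    push_cast [Nat.cast_sub hn] at h
    linarith
  have hopt : shannonEntropy (fun o : Option (JointEdgeMark Ξ1 Ξ2) =>
        o.elim (1 - (∑ x, pe x) / n) (fun x => pe x / n))
      = -((1 - (∑ x, pe x) / n) * Real.log (1 - (∑ x, pe x) / n))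
        - ((∑ x, pe x * Real.log (pe x)) / n - (∑ x, pe x) / n * Real.log n) := by
    unfold shannonEntropy
    rw [Fintype.sum_option]
    simp only [Option.elim_none, Option.elim_some]
    have hterm : ∀ a : JointEdgeMark Ξ1 Ξ2, pe a / (n : ℝ) * Real.log (pe a / n)
        = pe a * Real.log (pe a) / n - pe a / n * Real.log n := by
      intro a
      by_cases h : pe a = 0
      · simp [h]
      · rw [Real.log_div h hn0]; ring
    simp_rw [hterm]
    rw [Finset.sum_sub_distrib, ← Finset.sum_div]
    have h2 : ∑ a : JointEdgeMark Ξ1 Ξ2, pe a / (n : ℝ) * Real.log n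
        = (∑ x, pe x) / n * Real.log n := by
      rw [← Finset.sum_mul, ← Finset.sum_div]
    rw [h2]
    ring
  show g n = _
  rw [er_formula pe q hq1 n hn, hcardn, hopt, hSig,
    show erD12 pe = ∑ x, pe x from rfl]
  simp only [hgdef]
  set L : ℝ := Real.log (1 - (∑ x, pe x) / n) with hL
  set M : ℝ := Real.log n with hM
  field_simp
  ring

end
end
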